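/- Let X be n-Hausdorff and Y = n-κX the Katětov-type n-H-closed extension of X. If f : Y → Y is a continuous surjection with f(x) = x for all x ∈ X, then f is a homeomorphism. -/

import Mathlib

open Set Topology Function

universe u v

/-- A space is `n`-Hausdorff if any `n` distinct points admit open neighborhoods
with empty intersection. -/
def NHausdorff (X : Type u) [TopologicalSpace X] (n : ℕ) : Prop :=
  ∀ x : Fin n → X, Function.Injective x →
    ∃ U : Fin n → Set X, (∀ i, IsOpen (U i) ∧ x i ∈ U i) ∧ (⋂ i, U i) = (∅ : Set X)

/-- An open filter on `X`: a nonempty family of nonempty open sets closed under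
finite intersections and open supersets. -/
structure IsOpenFilter {X : Type u} [TopologicalSpace X] (F : Set (Set X)) : Prop where
  nonempty : F.Nonempty
  isOpen_mem : ∀ U ∈ F, IsOpen U
  nonempty_mem : ∀ U ∈ F, U.Nonempty
  inter_mem : ∀ U ∈ F, ∀ V ∈ F, U ∩ V ∈ F
  superset_mem : ∀ U ∈ F, ∀ V : Set X, IsOpen V → U ⊆ V → V ∈ F

/-- An open ultrafilter: a maximal open filter. -/
def IsOpenUltrafilter {X : Type u} [TopologicalSpace X] (F : Set (Set X)) : Prop :=
  IsOpenFilter F ∧ ∀ G : Set (Set X), IsOpenFilter G → F ⊆ G → G = F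

/-- The adherence of a family of sets: `⋂ {cl U : U ∈ F}`. -/
def adh {X : Type u} [TopologicalSpace X] (F : Set (Set X)) : Set X :=
  ⋂ U ∈ F, closure U

lemma univ_mem_of_isOpenFilter {X : Type u} [TopologicalSpace X] {F : Set (Set X)}
    (hF : IsOpenFilter F) : Set.univ ∈ F := by
  obtain ⟨U, hU⟩ := hF.nonempty
  exact hF.superset_mem U hU Set.univ isOpen_univ (Set.subset_univ U)

/-- The non-full open ultrafilters on `X`: those with fewer than `n-1` adherent points. -/
def NonFullUlt (X : Type u) [TopologicalSpace X] (n : ℕ) : Type u :=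
  {F : Set (Set X) // IsOpenUltrafilter F ∧ (adh F).encard < (n - 1 : ℕ)}

/-- The points added to `X` to form `n-κX`: for each non-full open ultrafilter `U`,
a set of `n - 1 - |aU|` new points. -/
def KPoints (X : Type u) [TopologicalSpace X] (n : ℕ) : Type u :=
  Σ F : NonFullUlt X n, Fin (n - 1 - (adh F.val).ncard)

/-- The underlying set of the Katětov-type extension `n-κX`. -/
def nKatetov (X : Type u) [TopologicalSpace X] (n : ℕ) : Type u :=
  X ⊕ KPoints X n

/-- The topology of `n-κX`: `V` is open iff `V ∩ X` is open in `X` and each added point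
`p` (associated to the ultrafilter `p.1`) in `V` satisfies `V ∩ X ∈ p.1`. -/
def nKatetovTop (X : Type u) [TopologicalSpace X] (n : ℕ) :
    TopologicalSpace (nKatetov X n) where
  IsOpen V := IsOpen (Sum.inl ⁻¹' V : Set X) ∧
    ∀ p : KPoints X n, Sum.inr p ∈ V → Sum.inl ⁻¹' V ∈ p.1.val
  isOpen_univ := by
    exact ⟨isOpen_univ, fun p _ => univ_mem_of_isOpenFilter p.1.property.1.1⟩
  isOpen_inter := by
    rintro s t ⟨hs1, hs2⟩ ⟨ht1, ht2⟩
    exact ⟨hs1.inter ht1, fun p hp => p.1.property.1.1.inter_mem _ (hs2 p hp.1) _ (ht2 p hp.2)⟩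
  isOpen_sUnion := by
    intro S hS
    have hop : IsOpen (Sum.inl ⁻¹' ⋃₀ S : Set X) := by
      have h : (Sum.inl ⁻¹' ⋃₀ S : Set X) = ⋃ s ∈ S, (Sum.inl ⁻¹' s : Set X) := by
        ext x
        exact ⟨fun ⟨s, hs, hx⟩ => Set.mem_biUnion hs hx,
          fun hx => by obtain ⟨s, hs, hx⟩ := Set.mem_iUnion₂.1 hx; exact ⟨s, hs, hx⟩⟩
      rw [h]
      exact isOpen_biUnion fun s hs => (hS s hs).1
    refine ⟨hop, ?_⟩
    rintro p ⟨s, hsS, hps⟩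
    exact p.1.property.1.1.superset_mem _ ((hS s hsS).2 p hps) _ hop
      (fun x hx => ⟨s, hsS, hx⟩)


lemma nKatetov_isOpen_iff {X : Type u} [TopologicalSpace X] (n : ℕ)
    (V : Set (nKatetov X n)) :
    IsOpen[nKatetovTop X n] V ↔ IsOpen (Sum.inl ⁻¹' V : Set X) ∧
      ∀ p : KPoints X n, Sum.inr p ∈ V → Sum.inl ⁻¹' V ∈ p.1.val := Iff.rfl

set_option maxHeartbeats 2000000 in
theorem stmt17 {X : Type u} [TopologicalSpace X] (n : ℕ) (hn : 2 ≤ n)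
    (hX : NHausdorff X n) (f : nKatetov X n → nKatetov X n)
    (hf : Continuous[nKatetovTop X n, nKatetovTop X n] f)
    (hfs : Function.Surjective f)
    (hfx : ∀ x : X, f (Sum.inl x) = Sum.inl x) :
    @IsHomeomorph (nKatetov X n) (nKatetov X n) (nKatetovTop X n) (nKatetovTop X n) f := by
  -- Key: if f sends an added point to an added point, the ultrafilters agree
  have key : ∀ q p : KPoints X n, f (Sum.inr q) = Sum.inr p → p.1 = q.1 := by
    intro q p hqp
    have hsub : p.1.val ⊆ q.1.val := by
      intro U hU
      set V : Set (nKatetov X n) := Sum.inl '' U ∪ {Sum.inr p} with hVdef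
      have hpre : Sum.inl ⁻¹' V = U := by
        ext x
        show Sum.inl x ∈ V ↔ x ∈ U
        rw [hVdef]
        constructor
        · rintro (⟨y, hy, hyx⟩ | h)
          · exact (Sum.inl_injective hyx) ▸ hy
          · exact (Sum.inl_ne_inr (Set.mem_singleton_iff.mp h)).elim
        · intro hx; exact Or.inl ⟨x, hx, rfl⟩
      have hVopen : IsOpen[nKatetovTop X n] V := by
        rw [nKatetov_isOpen_iff]
        refine ⟨hpre ▸ p.1.property.1.1.isOpen_mem U hU, ?_⟩
        rintro r hr
        have : r = p := by
          rcases hr with h | h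
          · rcases h with ⟨x, _, hx⟩; exact absurd hx (by simp)
          · exact Sum.inr_injective h
        rw [this, hpre]; exact hU
      have hWopen : IsOpen[nKatetovTop X n] (f ⁻¹' V) := @Continuous.isOpen_preimage _ _ (nKatetovTop X n) (nKatetovTop X n) f hf V hVopen
      have hqW : Sum.inr q ∈ f ⁻¹' V := by
        show f (Sum.inr q) ∈ V; rw [hqp, hVdef]; exact Or.inr rfl
      have hmem := ((nKatetov_isOpen_iff n _).mp hWopen).2 q hqW
      have hpreW : Sum.inl ⁻¹' (f ⁻¹' V) = U := by
        ext x
        show f (Sum.inl x) ∈ V ↔ x ∈ U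
        rw [hfx x]; exact Set.ext_iff.mp hpre x
      exact (congrArg (· ∈ q.1.val) hpreW).mp hmem
    have := p.1.property.1.2 q.1.val q.1.property.1.1 hsub
    exact Subtype.ext this.symm
  -- surjectivity onto each fiber comes from points of the same fiber
  have surj_fiber : ∀ (F : NonFullUlt X n) (j : Fin (n - 1 - (adh F.val).ncard)),
      ∃ i, f (Sum.inr (⟨F, i⟩ : KPoints X n)) = Sum.inr ⟨F, j⟩ := by
    intro F j
    obtain ⟨y, hy⟩ := hfs (Sum.inr ⟨F, j⟩)
    rcases y with x | q
    · rw [hfx x] at hy; exact absurd hy (by simp)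
    · have hF' : (⟨F, j⟩ : KPoints X n).1 = q.1 := key q ⟨F, j⟩ hy
      obtain ⟨F', i⟩ := q
      cases hF'
      exact ⟨i, hy⟩
  -- the choice map on each fiber
  choose s hs_spec using surj_fiber
  have hs_inj : ∀ F, Function.Injective (s F) := by
    intro F j j' h
    have := (hs_spec F j).symm.trans (h ▸ hs_spec F j')
    have h2 := Sum.inr_injective this
    exact eq_of_heq (Sigma.mk.inj_iff.mp h2).2
  have hs_surj : ∀ F, Function.Surjective (s F) := fun F =>
    Finite.surjective_of_injective (hs_inj F)
  -- f maps added points to added points within the same fiber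
  have fiber_form : ∀ q : KPoints X n,
      ∃ p : KPoints X n, f (Sum.inr q) = Sum.inr p ∧ p.1 = q.1 := by
    rintro ⟨F, i⟩
    obtain ⟨j, hj⟩ := hs_surj F i
    subst hj
    exact ⟨⟨F, j⟩, hs_spec F j, rfl⟩
  -- f is injective on added points
  have uniq : ∀ q q' : KPoints X n, f (Sum.inr q) = f (Sum.inr q') → q = q' := by
    rintro ⟨F, i⟩ ⟨F', i'⟩ h
    obtain ⟨j, hj⟩ := hs_surj F i
    subst hj
    obtain ⟨j', hj'⟩ := hs_surj F' i'
    subst hj'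
    rw [hs_spec F j, hs_spec F' j'] at h
    have h2 := Sum.inr_injective h
    obtain ⟨hF, hjj⟩ := Sigma.mk.inj_iff.mp h2
    subst hF
    rw [eq_of_heq hjj]
  refine @IsHomeomorph.mk _ _ (nKatetovTop X n) (nKatetovTop X n) f hf ?_ ⟨?_, hfs⟩
  · -- open map
    intro V hV
    have hpreV : Sum.inl ⁻¹' (f '' V) = Sum.inl ⁻¹' V := by
      ext x
      constructor
      · rintro ⟨y, hyV, hy⟩
        rcases y with x' | q
        · rw [hfx x'] at hy
          rwa [← Sum.inl_injective hy]
        · obtain ⟨p, hp, -⟩ := fiber_form q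
          rw [hp] at hy
          exact absurd hy (by simp)
      · intro hx
        exact ⟨Sum.inl x, hx, hfx x⟩
    rw [nKatetov_isOpen_iff] at hV ⊢
    refine ⟨hpreV ▸ hV.1, ?_⟩
    rintro p ⟨y, hyV, hy⟩
    rcases y with x | q
    · rw [hfx x] at hy; exact absurd hy (by simp)
    · have hFq : p.1 = q.1 := key q p hy
      have := hV.2 q hyV
      exact (congrArg (· ∈ p.1.val) hpreV).mpr
        ((congrArg (fun F : NonFullUlt X n => (Sum.inl ⁻¹' V : Set X) ∈ F.val) hFq).mpr this)
  · -- injective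
    intro a b hab
    rcases a with x | q <;> rcases b with x' | q'
    · rw [hfx x, hfx x'] at hab; exact hab
    · obtain ⟨p, hp, -⟩ := fiber_form q'
      rw [hfx x, hp] at hab; exact absurd hab (by simp)
    · obtain ⟨p, hp, -⟩ := fiber_form q
      rw [hfx x', hp] at hab; exact absurd hab (by simp)
    · rw [uniq q q' hab]
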